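/- Let p, U: [0,∞) → ℝ be continuous, and suppose V, W: [0,∞) → ℝ are differentiable and satisfy the ordinary differential equations V'(t) = −2U(t)W(t) + 2W(t)V(t)p(t) and W'(t) = 2U(t)V(t) − U(t) − 2V(t)²p(t) + V(t)p(t) for all t ≥ 0, together with the initial constraint W(0)² + V(0)² = V(0). Then W(t)² + V(t)² = V(t) for all t ≥ 0; consequently 0 ≤ V(t) ≤ 1 and |W(t)| ≤ 1/2 for all t ≥ 0. -/

import Mathlib

open MeasureTheory Filter Set

noncomputable section

/-- **The invariant `W² + V² = V` of the semilinear system.** If `p, U` are continuous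
on `[0,∞)`, and `V, W` are differentiable on `[0,∞)` with
`V' = −2UW + 2WVp` and `W' = 2UV − U − 2V²p + Vp` for all `t ≥ 0`, and
`W(0)² + V(0)² = V(0)`, then `W(t)² + V(t)² = V(t)` for all `t ≥ 0`; consequently
`0 ≤ V(t) ≤ 1` and `|W(t)| ≤ 1/2` for all `t ≥ 0`. -/
theorem semilinear_VW_invariant
    (p U V W : ℝ → ℝ)
    (hp : ContinuousOn p (Set.Ici (0:ℝ)))
    (hU : ContinuousOn U (Set.Ici (0:ℝ)))
    (hV : ∀ t : ℝ, 0 ≤ t → HasDerivWithinAt V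
      (-2 * U t * W t + 2 * W t * V t * p t) (Set.Ici (0:ℝ)) t)
    (hW : ∀ t : ℝ, 0 ≤ t → HasDerivWithinAt W
      (2 * U t * V t - U t - 2 * (V t) ^ 2 * p t + V t * p t) (Set.Ici (0:ℝ)) t)
    (hinit : (W 0) ^ 2 + (V 0) ^ 2 = V 0) :
    ∀ t : ℝ, 0 ≤ t →
      ((W t) ^ 2 + (V t) ^ 2 = V t ∧ 0 ≤ V t ∧ V t ≤ 1 ∧ |W t| ≤ 1/2) := by
  intro t ht
  set E : ℝ → ℝ := fun s => W s ^ 2 + V s ^ 2 - V s with hE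
  have hEderiv : ∀ s : ℝ, 0 ≤ s → HasDerivWithinAt E 0 (Set.Ici (0:ℝ)) s := by
    intro s hs
    have h1 := ((hW s hs).pow 2).add ((hV s hs).pow 2)
    have h2 := h1.sub (hV s hs)
    convert (show HasDerivWithinAt E _ (Set.Ici (0:ℝ)) s from h2) using 1
    ring
  have key : ‖E t - E 0‖ ≤ 0 * ‖t - (0:ℝ)‖ := by
    apply (convex_Ici (0:ℝ)).norm_image_sub_le_of_norm_hasDerivWithin_le
      (f' := fun _ => (0:ℝ)) (fun x hx => hEderiv x hx)
      (fun x _ => by simp) (by simp : (0:ℝ) ∈ Set.Ici (0:ℝ)) (by exact ht)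
  have hE0 : E 0 = 0 := by simp [hE]; linarith
  have hEt : E t = 0 := by
    have h : E t - E 0 = 0 := by simpa using key
    linarith
  have hmain : W t ^ 2 + V t ^ 2 = V t := by
    have : W t ^ 2 + V t ^ 2 - V t = 0 := hEt
    linarith
  refine ⟨hmain, ?_, ?_, ?_⟩
  · nlinarith [sq_nonneg (W t), sq_nonneg (V t), sq_nonneg (V t - 1)]
  · nlinarith [sq_nonneg (W t), sq_nonneg (V t)]
  · rw [abs_le]
    constructor <;> nlinarith [sq_nonneg (V t - 1/2), sq_nonneg (W t)]
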